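/- Let q₁, q₂ ∈ (0,1), α₁, α₂ > 0, set h_i = q_i/(1 − q_i) and ρ = α₂/(α₁ + α₂), and let I_i(γ) = γ log(γ/q_i) + (1−γ) log((1−γ)/(1−q_i)). Then γ* = h₁^{1−ρ} h₂^{ρ} / (1 + h₁^{1−ρ} h₂^{ρ}) satisfies α₁ I₁′(γ*) + α₂ I₂′(γ*) = 0, and α₁ I₁(γ*) + α₂ I₂(γ*) = −(α₁ + α₂) log((1−q₁)^{1−ρ}(1−q₂)^{ρ} + q₁^{1−ρ} q₂^{ρ}). -/

import Mathlib

open Real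

lemma bern_deriv (q γ : ℝ) (hq0 : 0 < q) (hq1 : q < 1) (hγ0 : 0 < γ) (hγ1 : γ < 1) :
    deriv (fun x => x * Real.log (x / q) + (1 - x) * Real.log ((1 - x) / (1 - q))) γ
      = (Real.log γ - Real.log (1 - γ)) - (Real.log q - Real.log (1 - q)) := by
  have hγne : γ ≠ 0 := hγ0.ne'
  have h1γ0 : (0:ℝ) < 1 - γ := by linarith
  have h1γ : (1:ℝ) - γ ≠ 0 := h1γ0.ne'
  have hqne : q ≠ 0 := hq0.ne'
  have h1q0 : (0:ℝ) < 1 - q := by linarith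
  have h1q : (1:ℝ) - q ≠ 0 := h1q0.ne'
  have d1 : HasDerivAt (fun x : ℝ => x * Real.log (x / q)) (Real.log (γ / q) + 1) γ := by
    have hlog : HasDerivAt (fun x : ℝ => Real.log (x / q)) (1 / γ) γ := by
      have h := (Real.hasDerivAt_log (by positivity : γ / q ≠ 0)).comp γ
        ((hasDerivAt_id γ).div_const q)
      refine HasDerivAt.congr_deriv h ?_
      field_simp
    have h := (hasDerivAt_id γ).mul hlog
    refine HasDerivAt.congr_deriv h ?_
    simp only [id_eq]
    field_simp
  have d2 : HasDerivAt (fun x : ℝ => (1 - x) * Real.log ((1 - x) / (1 - q)))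
      (-Real.log ((1 - γ) / (1 - q)) - 1) γ := by
    have hinner : HasDerivAt (fun x : ℝ => (1 - x) / (1 - q)) (-(1 / (1 - q))) γ := by
      have h := ((hasDerivAt_id γ).const_sub 1).div_const (1 - q)
      refine HasDerivAt.congr_deriv h ?_
      ring
    have hlog : HasDerivAt (fun x : ℝ => Real.log ((1 - x) / (1 - q))) (-(1 / (1 - γ))) γ := by
      have h := (Real.hasDerivAt_log (by positivity : (1 - γ) / (1 - q) ≠ 0)).comp γ hinner
      refine HasDerivAt.congr_deriv h ?_
      field_simp
    have h := ((hasDerivAt_id γ).const_sub 1).mul hlog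
    refine HasDerivAt.congr_deriv h ?_
    simp only [id_eq]
    field_simp
    ring
  rw [HasDerivAt.deriv (f := fun x => x * Real.log (x / q) + (1 - x) * Real.log ((1 - x) / (1 - q))) (d1.add d2), Real.log_div hγne hqne, Real.log_div h1γ h1q]
  ring

/-- Closed-form pairwise large-deviations rate for two Bernoulli designs. -/
theorem bernoulli_pairwise_rate (q₁ q₂ α₁ α₂ : ℝ)
    (hq₁0 : 0 < q₁) (hq₁1 : q₁ < 1) (hq₂0 : 0 < q₂) (hq₂1 : q₂ < 1)
    (hα₁ : 0 < α₁) (hα₂ : 0 < α₂)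
    (I₁ I₂ : ℝ → ℝ)
    (hI₁ : I₁ = fun γ => γ * Real.log (γ / q₁) + (1 - γ) * Real.log ((1 - γ) / (1 - q₁)))
    (hI₂ : I₂ = fun γ => γ * Real.log (γ / q₂) + (1 - γ) * Real.log ((1 - γ) / (1 - q₂)))
    (h₁ h₂ ρ γs : ℝ)
    (hh₁ : h₁ = q₁ / (1 - q₁)) (hh₂ : h₂ = q₂ / (1 - q₂))
    (hρ : ρ = α₂ / (α₁ + α₂))
    (hγs : γs = h₁ ^ (1 - ρ) * h₂ ^ ρ / (1 + h₁ ^ (1 - ρ) * h₂ ^ ρ)) :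
    α₁ * deriv I₁ γs + α₂ * deriv I₂ γs = 0 ∧
    α₁ * I₁ γs + α₂ * I₂ γs
      = -(α₁ + α₂) * Real.log ((1 - q₁) ^ (1 - ρ) * (1 - q₂) ^ ρ
          + q₁ ^ (1 - ρ) * q₂ ^ ρ) := by
  have h1q₁ : (0:ℝ) < 1 - q₁ := by linarith
  have h1q₂ : (0:ℝ) < 1 - q₂ := by linarith
  set A : ℝ := q₁ ^ (1 - ρ) * q₂ ^ ρ with hA
  set B : ℝ := (1 - q₁) ^ (1 - ρ) * (1 - q₂) ^ ρ with hB
  have hA0 : 0 < A := by positivity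
  have hB0 : 0 < B := by positivity
  have hAB0 : 0 < A + B := by positivity
  have hH : h₁ ^ (1 - ρ) * h₂ ^ ρ = A / B := by
    rw [hh₁, hh₂, Real.div_rpow hq₁0.le h1q₁.le, Real.div_rpow hq₂0.le h1q₂.le, hA, hB]
    field_simp
  have hγsA : γs = A / (A + B) := by
    have hpos : (0:ℝ) < 1 + A / B := by positivity
    rw [hγs, hH, div_eq_div_iff hpos.ne' hAB0.ne']
    field_simp
    exact add_comm A B
  have hγ0 : 0 < γs := by rw [hγsA]; positivity
  have hγ1 : γs < 1 := by
    rw [hγsA]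
    rw [div_lt_one hAB0]
    linarith
  have h1γsB : 1 - γs = B / (A + B) := by
    rw [hγsA]
    field_simp
    ring
  have hlogA : Real.log A = (1 - ρ) * Real.log q₁ + ρ * Real.log q₂ := by
    rw [hA, Real.log_mul (by positivity) (by positivity), Real.log_rpow hq₁0,
      Real.log_rpow hq₂0]
  have hlogB : Real.log B = (1 - ρ) * Real.log (1 - q₁) + ρ * Real.log (1 - q₂) := by
    rw [hB, Real.log_mul (by positivity) (by positivity), Real.log_rpow h1q₁,
      Real.log_rpow h1q₂]
  have hLγ : Real.log γs = Real.log A - Real.log (A + B) := by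
    rw [hγsA, Real.log_div hA0.ne' hAB0.ne']
  have hL1 : Real.log (1 - γs) = Real.log B - Real.log (A + B) := by
    rw [h1γsB, Real.log_div hB0.ne' hAB0.ne']
  have hS : (0:ℝ) < α₁ + α₂ := by linarith
  have hα1eq : α₁ = (α₁ + α₂) * (1 - ρ) := by
    rw [hρ]
    field_simp
    ring
  have hα2eq : α₂ = (α₁ + α₂) * ρ := by
    rw [hρ]
    field_simp
  have hD : Real.log (B + A) = Real.log (A + B) := by rw [add_comm]
  constructor
  · rw [hI₁, hI₂, bern_deriv q₁ γs hq₁0 hq₁1 hγ0 hγ1, bern_deriv q₂ γs hq₂0 hq₂1 hγ0 hγ1]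
    linear_combination (α₁ + α₂) * (hLγ - hL1 + hlogA - hlogB)
      - (Real.log q₁ - Real.log (1 - q₁)) * hα1eq
      - (Real.log q₂ - Real.log (1 - q₂)) * hα2eq
  · simp only [hI₁, hI₂]
    rw [Real.log_div hγ0.ne' hq₁0.ne', Real.log_div hγ0.ne' hq₂0.ne',
      Real.log_div (by linarith : (1:ℝ) - γs ≠ 0) h1q₁.ne',
      Real.log_div (by linarith : (1:ℝ) - γs ≠ 0) h1q₂.ne']
    linear_combination (α₁ + α₂) * (γs * hLγ + γs * hlogA + (1 - γs) * hL1
        + (1 - γs) * hlogB + hD)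
      - (γs * Real.log q₁ + (1 - γs) * Real.log (1 - q₁)) * hα1eq
      - (γs * Real.log q₂ + (1 - γs) * Real.log (1 - q₂)) * hα2eq
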